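/- arXiv:1309.4403 — 6 statements merged into one kernel-verified Lean document; each statement's English description precedes it below -/
import Mathlib

section
/- Conversely, if a multiplicative norm on a field satisfies |n·1| ≤ 1 for all natural numbers n, then it satisfies the ultrametric inequality |x + y| ≤ max(|x|, |y|). -/
open Filter Topology

theorem stmt5 {K : Type*} [Field K] (v : K → NNReal)
    (h0 : ∀ x : K, v x = 0 ↔ x = 0)
    (hmul : ∀ x y : K, v (x * y) = v x * v y)
    (htri : ∀ x y : K, v (x + y) ≤ v x + v y)
    (hint : ∀ n : ℕ, v ((n : K) * 1) ≤ 1) :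
    ∀ x y : K, v (x + y) ≤ max (v x) (v y) := by
  intro x y
  set M := max (v x) (v y) with hMdef
  -- v 1 = 1
  have hv1 : v 1 = 1 := by
    have h := hmul 1 1
    rw [one_mul] at h
    have h1 : v (1 : K) ≠ 0 := by simp [h0]
    have := mul_left_cancel₀ h1 (show v (1:K) * 1 = v 1 * v 1 by rw [mul_one, ← h])
    exact this.symm
  have hv0 : v 0 = 0 := (h0 0).mpr rfl
  have vpow : ∀ (z : K) (k : ℕ), v (z ^ k) = v z ^ k := by
    intro z k
    induction k with
    | zero => simp [hv1]
    | succ k ih => rw [pow_succ, pow_succ, hmul, ih]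
  have hsumle : ∀ (n : ℕ) (f : ℕ → K),
      v (∑ i ∈ Finset.range n, f i) ≤ ∑ i ∈ Finset.range n, v (f i) := by
    intro n f
    induction n with
    | zero => simp [hv0]
    | succ n ih =>
      rw [Finset.sum_range_succ, Finset.sum_range_succ]
      exact le_trans (htri _ _) (add_le_add_left ih _)
  have key : ∀ m : ℕ, v (x + y) ^ m ≤ (m + 1 : NNReal) * M ^ m := by
    intro m
    have hexp : (x + y) ^ m
        = ∑ k ∈ Finset.range (m + 1), x ^ k * y ^ (m - k) * (m.choose k : K) :=
      add_pow x y m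
    have hterm : ∀ k ∈ Finset.range (m + 1),
        v (x ^ k * y ^ (m - k) * (m.choose k : K)) ≤ M ^ m := by
      intro k hk
      have hkm : k ≤ m := Nat.lt_succ_iff.mp (Finset.mem_range.mp hk)
      have hc : v (m.choose k : K) ≤ 1 := by
        have := hint (m.choose k); rwa [mul_one] at this
      rw [hmul, hmul, vpow, vpow]
      calc v x ^ k * v y ^ (m - k) * v ((m.choose k : K))
          ≤ M ^ k * M ^ (m - k) * 1 := by
            gcongr <;> [exact le_max_left _ _; exact le_max_right _ _]
        _ = M ^ (k + (m - k)) := by rw [mul_one, ← pow_add]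
        _ = M ^ m := by rw [Nat.add_sub_cancel' hkm]
    calc v (x + y) ^ m = v ((x + y) ^ m) := (vpow _ _).symm
      _ ≤ ∑ k ∈ Finset.range (m + 1), v (x ^ k * y ^ (m - k) * (m.choose k : K)) := by
          rw [hexp]; exact hsumle _ _
      _ ≤ ∑ _k ∈ Finset.range (m + 1), M ^ m := Finset.sum_le_sum hterm
      _ = (m + 1 : NNReal) * M ^ m := by
          rw [Finset.sum_const, Finset.card_range, nsmul_eq_mul]; push_cast; ring
  -- Pass to real numbers
  by_contra hcon
  push_neg at hcon
  have hMa : (M : ℝ) < (v (x + y) : ℝ) := by exact_mod_cast hcon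
  set a : ℝ := (v (x + y) : ℝ)
  have ha0 : 0 < a := lt_of_le_of_lt (M.coe_nonneg) hMa
  set r : ℝ := (M : ℝ) / a with hr
  have hr0 : 0 ≤ r := div_nonneg M.coe_nonneg ha0.le
  have hr1 : r < 1 := (div_lt_one ha0).mpr hMa
  have hlim : Tendsto (fun n : ℕ ↦ (n : ℝ) * r ^ n + r ^ n) atTop (𝓝 0) := by
    simpa using (tendsto_self_mul_const_pow_of_lt_one hr0 hr1).add
      (tendsto_pow_atTop_nhds_zero_of_lt_one hr0 hr1)
  have hev : ∀ᶠ n : ℕ in atTop, (n : ℝ) * r ^ n + r ^ n < 1 :=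
    (tendsto_order.mp hlim).2 1 one_pos
  obtain ⟨n, hn⟩ := hev.exists
  -- key at n in ℝ
  have hkeyR : a ^ n ≤ ((n : ℝ) + 1) * (M : ℝ) ^ n := by
    have := key n
    have : ((v (x + y) ^ n : NNReal) : ℝ) ≤ (((n + 1 : NNReal) * M ^ n : NNReal) : ℝ) :=
      NNReal.coe_le_coe.mpr this
    push_cast at this
    exact this
  have hMn : (M : ℝ) ^ n = r ^ n * a ^ n := by
    rw [hr, div_pow, div_mul_cancel₀]
    exact pow_ne_zero _ ha0.ne'
  rw [hMn] at hkeyR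
  have han : 0 < a ^ n := pow_pos ha0 n
  have : a ^ n < a ^ n := by
    calc a ^ n ≤ ((n : ℝ) + 1) * (r ^ n * a ^ n) := hkeyR
      _ = ((n : ℝ) * r ^ n + r ^ n) * a ^ n := by ring
      _ < 1 * a ^ n := by exact mul_lt_mul_of_pos_right hn han
      _ = a ^ n := one_mul _
  exact lt_irrefl _ this
end

section
/- Any multiplicative seminorm on a K-algebra A extending the norm on a nonarchimedean field K satisfies the ultrametric inequality: |f + g| ≤ max(|f|, |g|) for all f, g ∈ A. -/
theorem stmt9 {K A : Type*} [Field K] [CommRing A] [Algebra K A]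
    (vK : K → NNReal)
    (hK0 : ∀ x : K, vK x = 0 ↔ x = 0)
    (hKmul : ∀ x y : K, vK (x * y) = vK x * vK y)
    (hKultra : ∀ x y : K, vK (x + y) ≤ max (vK x) (vK y))
    (v : A → NNReal)
    (hmul : ∀ f g : A, v (f * g) = v f * v g)
    (htri : ∀ f g : A, v (f + g) ≤ v f + v g)
    (hext : ∀ c : K, v (algebraMap K A c) = vK c) :
    ∀ f g : A, v (f + g) ≤ max (v f) (v g) := by
  -- vK 1 = 1
  have hK1 : vK 1 = 1 := by
    have h1 : vK 1 ≠ 0 := by simp [hK0]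
    have := hKmul 1 1
    rw [one_mul] at this
    exact (mul_left_cancel₀ h1 (by rw [← this, mul_one])).symm
  -- vK of naturals is ≤ 1
  have hKnat : ∀ n : ℕ, vK (n : K) ≤ 1 := by
    intro n
    induction n with
    | zero => simp [(hK0 0).mpr rfl]
    | succ n ih =>
      push_cast
      exact (hKultra _ _).trans (max_le ih hK1.le)
  -- v of naturals is ≤ 1
  have hAnat : ∀ n : ℕ, v (n : A) ≤ 1 := by
    intro n
    rw [← map_natCast (algebraMap K A) n, hext]
    exact hKnat n
  -- v of powers
  have hvpow : ∀ (x : A) (n : ℕ), v (x ^ n) = v x ^ n := by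
    intro x n
    induction n with
    | zero =>
      have : v ((1 : A) * 1) = v 1 * v 1 := hmul 1 1
      rw [one_mul] at this
      rcases eq_or_ne (v 1) 0 with h0 | h0
      · -- then v x = v (x*1) = v x * 0 = 0 for all x, contradiction with v 1... handle:
        exfalso
        have := hext 1
        rw [map_one, hK1] at this
        simp [this] at h0
      · simp only [pow_zero]
        exact (mul_left_cancel₀ h0 (by rw [← this, mul_one])).symm
    | succ n ih => rw [pow_succ, hmul, ih, pow_succ]
  have hv1 : v 1 = 1 := by rw [← map_one (algebraMap K A), hext, hK1]
  -- v of finite sums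
  have hvsum : ∀ (s : Finset ℕ) (F : ℕ → A), v (∑ i ∈ s, F i) ≤ ∑ i ∈ s, v (F i) := by
    intro s F
    induction s using Finset.cons_induction with
    | empty =>
      simp only [Finset.sum_empty]
      have h0 := hext 0
      rw [map_zero, (hK0 0).mpr rfl] at h0
      exact h0.le
    | cons a s ha ih =>
      rw [Finset.sum_cons, Finset.sum_cons]
      exact (htri _ _).trans (add_le_add le_rfl ih)
  intro f g
  set M : NNReal := max (v f) (v g) with hM
  rcases eq_or_ne M 0 with hM0 | hM0
  · have hf : v f = 0 := le_antisymm (hM0 ▸ le_max_left _ _) bot_le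
    have hg : v g = 0 := le_antisymm (hM0 ▸ le_max_right _ _) bot_le
    calc v (f + g) ≤ v f + v g := htri f g
    _ = 0 := by rw [hf, hg, add_zero]
    _ ≤ M := bot_le
  -- the m-th power bound
  have key : ∀ m : ℕ, v (f + g) ^ m ≤ (m + 1 : ℕ) * M ^ m := by
    intro m
    rw [← hvpow, add_pow]
    refine (hvsum _ _).trans ?_
    have hterm : ∀ k ∈ Finset.range (m + 1),
        v (f ^ k * g ^ (m - k) * (m.choose k : A)) ≤ M ^ m := by
      intro k hk
      rw [Finset.mem_range, Nat.lt_succ_iff] at hk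
      rw [hmul, hmul, hvpow, hvpow]
      calc v f ^ k * v g ^ (m - k) * v ((m.choose k : A))
          ≤ M ^ k * M ^ (m - k) * 1 := by
            gcongr
            · exact le_max_left _ _
            · exact le_max_right _ _
            · exact hAnat _
        _ = M ^ m := by rw [mul_one, ← pow_add, Nat.add_sub_cancel' hk]
    calc ∑ k ∈ Finset.range (m + 1), v (f ^ k * g ^ (m - k) * (m.choose k : A))
        ≤ ∑ _k ∈ Finset.range (m + 1), M ^ m := Finset.sum_le_sum hterm
      _ = (m + 1 : ℕ) * M ^ m := by
          rw [Finset.sum_const, Finset.card_range, nsmul_eq_mul]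
  -- conclude by density
  refine le_of_forall_gt_imp_ge_of_dense fun a ha ↦ ?_
  have h1a : 1 < (a / M : NNReal) := by
    rwa [lt_div_iff₀ (hM0.bot_lt), one_mul]
  obtain ⟨m, hm⟩ : ∃ m : ℕ, ((m + 1 : ℕ) : NNReal) < (a / M) ^ m := by
    obtain ⟨m, hm⟩ := Real.exists_natCast_add_one_lt_pow_of_one_lt (a := (a / M : NNReal)) (by exact_mod_cast h1a)
    exact ⟨m, by exact_mod_cast hm⟩
  have hm' : ((m + 1 : ℕ) : NNReal) * M ^ m < a ^ m := by
    rw [div_pow] at hm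
    rw [← lt_div_iff₀ (pow_pos (hM0.bot_lt) m)]
    exact hm
  have : v (f + g) ^ m < a ^ m := lt_of_le_of_lt (key m) hm'
  exact (lt_of_pow_lt_pow_left₀ m (zero_le : 0 ≤ a) this).le
end

section
/- A multiplicative seminorm on a commutative ring A with kernel the prime ideal 𝔭 factors uniquely through a multiplicative norm on the residue field κ(𝔭) = Frac(A/𝔭). -/
theorem stmt11 {A : Type*} [CommRing A]
    (v : A → NNReal)
    (h0 : v 0 = 0) (h1 : v 1 = 1)
    (hmul : ∀ f g : A, v (f * g) = v f * v g)
    (htri : ∀ f g : A, v (f + g) ≤ v f + v g)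
    (P : Ideal A) (hP : P.IsPrime)
    (hker : ∀ f : A, f ∈ P ↔ v f = 0) :
    ∃! w : FractionRing (A ⧸ P) → NNReal,
      (∀ x, w x = 0 ↔ x = 0) ∧
      (∀ x y, w (x * y) = w x * w y) ∧
      (∀ x y, w (x + y) ≤ w x + w y) ∧
      (∀ f : A, w (algebraMap (A ⧸ P) (FractionRing (A ⧸ P)) (Ideal.Quotient.mk P f)) = v f) := by
  classical
  haveI := hP
  set K := FractionRing (A ⧸ P)
  set alg := algebraMap (A ⧸ P) K with halg
  have hconst : ∀ a b : A, a - b ∈ P → v a = v b := by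
    intro a b hab
    have hba : b - a ∈ P := by
      have := P.neg_mem hab; simpa using this
    have h1' : v a ≤ v b := by
      calc v a = v (b + (a - b)) := by ring_nf
        _ ≤ v b + v (a - b) := htri _ _
        _ = v b := by rw [(hker _).mp hab, add_zero]
    have h2' : v b ≤ v a := by
      calc v b = v (a + (b - a)) := by ring_nf
        _ ≤ v a + v (b - a) := htri _ _
        _ = v a := by rw [(hker _).mp hba, add_zero]
    exact le_antisymm h1' h2'
  set vq : A ⧸ P → NNReal := fun x => v x.out with hvqdef
  have hmk : ∀ f : A, vq (Ideal.Quotient.mk P f) = v f := by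
    intro f
    apply hconst
    rw [← Ideal.Quotient.eq]
    exact Quotient.out_eq _
  have hmksurj := Ideal.Quotient.mk_surjective (I := P)
  -- properties of vq
  have hvq0 : ∀ x : A ⧸ P, vq x = 0 ↔ x = 0 := by
    intro x
    obtain ⟨f, rfl⟩ := hmksurj x
    rw [hmk, ← hker, Ideal.Quotient.eq_zero_iff_mem]
  have hvqmul : ∀ x y : A ⧸ P, vq (x * y) = vq x * vq y := by
    intro x y
    obtain ⟨f, rfl⟩ := hmksurj x
    obtain ⟨g, rfl⟩ := hmksurj y
    rw [← map_mul, hmk, hmk, hmk, hmul]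
  have hvqadd : ∀ x y : A ⧸ P, vq (x + y) ≤ vq x + vq y := by
    intro x y
    obtain ⟨f, rfl⟩ := hmksurj x
    obtain ⟨g, rfl⟩ := hmksurj y
    rw [← map_add, hmk, hmk, hmk]
    exact htri f g
  have hvq1 : vq 1 = 1 := by
    have := hmk 1; rw [map_one] at this; rw [this, h1]
  -- the map on the fraction field
  set S := nonZeroDivisors (A ⧸ P) with hS
  have hinj : Function.Injective alg := IsFractionRing.injective (A ⧸ P) K
  set w : K → NNReal := fun x =>
    vq (IsLocalization.sec S x).1 / vq ((IsLocalization.sec S x).2 : A ⧸ P) with hwdef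
  have hsec_ne : ∀ x : K, ((IsLocalization.sec S x).2 : A ⧸ P) ≠ 0 := fun x =>
    nonZeroDivisors.ne_zero (IsLocalization.sec S x).2.2
  have hspec : ∀ (x : K) (a s : A ⧸ P), s ≠ 0 → x * alg s = alg a → w x = vq a / vq s := by
    intro x a s hs hx
    have hsec := IsLocalization.sec_spec (M := S) x
    set b := (IsLocalization.sec S x).1
    set t := ((IsLocalization.sec S x).2 : A ⧸ P)
    have ht : t ≠ 0 := hsec_ne x
    -- hsec : x * alg t = alg b
    have key : a * t = b * s := by
      apply hinj
      rw [map_mul, map_mul, ← hx, ← hsec]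
      ring
    have : vq a * vq t = vq b * vq s := by rw [← hvqmul, ← hvqmul, key]
    rw [hwdef]
    show vq b / vq t = vq a / vq s
    rw [div_eq_div_iff (by simpa [hvq0] using ht) (by simpa [hvq0] using hs)]
    exact this.symm
  -- every x has a representation
  have hrep : ∀ x : K, ∃ a s : A ⧸ P, s ≠ 0 ∧ x * alg s = alg a := by
    intro x
    exact ⟨(IsLocalization.sec S x).1, ((IsLocalization.sec S x).2 : A ⧸ P), hsec_ne x,
      IsLocalization.sec_spec (M := S) x⟩
  have hvqne : ∀ {s : A ⧸ P}, s ≠ 0 → vq s ≠ 0 := by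
    intro s hs h; exact hs ((hvq0 s).mp h)
  -- the four properties
  have hw0 : ∀ x : K, w x = 0 ↔ x = 0 := by
    intro x
    obtain ⟨a, s, hs, hx⟩ := hrep x
    rw [hspec x a s hs hx]
    constructor
    · intro h
      have ha : vq a = 0 := by
        rcases div_eq_zero_iff.mp h with h' | h'
        · exact h'
        · exact absurd h' (hvqne hs)
      have : alg a = 0 := by rw [(hvq0 a).mp ha, map_zero]
      have hsne : alg s ≠ 0 := fun hc => hs (hinj (by rw [hc, map_zero]))
      have := hx.trans this
      exact (mul_eq_zero.mp this).resolve_right hsne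
    · intro h
      subst h
      have : alg a = 0 := by rw [← hx, zero_mul]
      have : a = 0 := hinj (by rw [this, map_zero])
      rw [this, (hvq0 0).mpr rfl, zero_div]
  have hwmul : ∀ x y : K, w (x * y) = w x * w y := by
    intro x y
    obtain ⟨a, s, hs, hx⟩ := hrep x
    obtain ⟨b, t, ht, hy⟩ := hrep y
    have hst : s * t ≠ 0 := mul_ne_zero hs ht
    have : (x * y) * alg (s * t) = alg (a * b) := by
      rw [map_mul, map_mul]
      calc x * y * (alg s * alg t) = (x * alg s) * (y * alg t) := by ring
        _ = alg a * alg b := by rw [hx, hy]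
    rw [hspec _ _ _ hst this, hspec _ _ _ hs hx, hspec _ _ _ ht hy,
      hvqmul, hvqmul, div_mul_div_comm]
  have hwadd : ∀ x y : K, w (x + y) ≤ w x + w y := by
    intro x y
    obtain ⟨a, s, hs, hx⟩ := hrep x
    obtain ⟨b, t, ht, hy⟩ := hrep y
    have hst : s * t ≠ 0 := mul_ne_zero hs ht
    have : (x + y) * alg (s * t) = alg (a * t + b * s) := by
      rw [map_mul, map_add, map_mul, map_mul]
      calc (x + y) * (alg s * alg t) = (x * alg s) * alg t + (y * alg t) * alg s := by ring
        _ = alg a * alg t + alg b * alg s := by rw [hx, hy]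
    rw [hspec _ _ _ hst this, hspec _ _ _ hs hx, hspec _ _ _ ht hy, hvqmul,
      div_add_div _ _ (hvqne hs) (hvqne ht)]
    have hpos : 0 < vq s * vq t :=
      pos_iff_ne_zero.mpr (mul_ne_zero (hvqne hs) (hvqne ht))
    gcongr
    calc vq (a * t + b * s) ≤ vq (a * t) + vq (b * s) := hvqadd _ _
      _ = vq a * vq t + vq s * vq b := by
          rw [hvqmul, hvqmul, mul_comm (vq b) (vq s)]
  have hwpull : ∀ f : A, w (alg (Ideal.Quotient.mk P f)) = v f := by
    intro f
    have h1' : alg (Ideal.Quotient.mk P f) * alg 1 = alg (Ideal.Quotient.mk P f) := by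
      rw [map_one, mul_one]
    rw [hspec _ _ _ one_ne_zero h1', hvq1, div_one, hmk]
  refine ⟨w, ⟨hw0, hwmul, hwadd, hwpull⟩, ?_⟩
  -- uniqueness
  rintro w' ⟨hw0', hwmul', hwadd', hwpull'⟩
  funext x
  obtain ⟨a, s, hs, hx⟩ := hrep x
  obtain ⟨f, rfl⟩ := hmksurj a
  obtain ⟨g, rfl⟩ := hmksurj s
  have h1' : w' x * v g = v f := by
    rw [← hwpull' f, ← hwpull' g, ← hwmul', hx]
  have hg : v g ≠ 0 := by
    rw [← hmk]; exact hvqne hs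
  have h2' : w' x = v f / v g := by
    field_simp at h1' ⊢
    exact h1'
  rw [h2', hspec x _ _ hs hx, hmk, hmk]
end

section
/- Let K be a field with the trivial norm, and let x be a multiplicative seminorm on K[y] extending it with |y|_x ≤ 1 and |·|_x not identically 1 on nonzero polynomials. Then |f|_x ≤ 1 for all f ∈ K[y], and the set {f ∈ K[y] : |f|_x < 1} is a nonzero prime ideal of K[y]. -/
theorem stmt13 {K : Type*} [Field K] (v : Polynomial K → NNReal)
    (h0 : v 0 = 0)
    (htriv : ∀ c : K, c ≠ 0 → v (Polynomial.C c) = 1)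
    (hmul : ∀ f g : Polynomial K, v (f * g) = v f * v g)
    (hultra : ∀ f g : Polynomial K, v (f + g) ≤ max (v f) (v g))
    (hX : v Polynomial.X ≤ 1)
    (hnottriv : ∃ f : Polynomial K, f ≠ 0 ∧ v f ≠ 1) :
    (∀ f : Polynomial K, v f ≤ 1) ∧
    ∃ P : Ideal (Polynomial K), P.IsPrime ∧ P ≠ ⊥ ∧
      ∀ f : Polynomial K, f ∈ P ↔ v f < 1 := by
  have h1 : v 1 = 1 := by simpa using htriv 1 one_ne_zero
  have hC : ∀ c : K, v (Polynomial.C c) ≤ 1 := by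
    intro c
    by_cases hc : c = 0
    · simp [hc, h0]
    · exact (htriv c hc).le
  have hXn : ∀ n : ℕ, v (Polynomial.X ^ n) ≤ 1 := by
    intro n
    induction n with
    | zero => simpa using h1.le
    | succ n ih =>
      rw [pow_succ, hmul]
      exact mul_le_one' ih hX
  have hle : ∀ f : Polynomial K, v f ≤ 1 := by
    intro f
    induction f using Polynomial.induction_on' with
    | add p q hp hq => exact (hultra p q).trans (max_le hp hq)
    | monomial n a =>
      rw [← Polynomial.C_mul_X_pow_eq_monomial, hmul]
      exact mul_le_one' (hC a) (hXn n)
  refine ⟨hle, ?_⟩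
  obtain ⟨g, hg0, hg1⟩ := hnottriv
  refine ⟨{ carrier := {f | v f < 1},
            add_mem' := ?_, zero_mem' := ?_, smul_mem' := ?_ }, ?_, ?_, fun f => Iff.rfl⟩
  · intro a b ha hb
    exact lt_of_le_of_lt (hultra a b) (max_lt ha hb)
  · simpa [h0] using zero_lt_one
  · intro c f hf
    simp only [smul_eq_mul, Set.mem_setOf_eq, hmul]
    exact (mul_le_of_le_one_left zero_le (hle c)).trans_lt hf
  · constructor
    · intro htop
      have : v 1 < 1 := by
        have : (1 : Polynomial K) ∈ (⊤ : Ideal (Polynomial K)) := trivial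
        rw [← htop] at this
        exact this
      simp [h1] at this
    · intro a b hab
      simp only [Submodule.mem_mk, AddSubmonoid.mem_mk, AddSubsemigroup.mem_mk,
        Set.mem_setOf_eq, hmul] at hab ⊢
      by_contra hcon
      push_neg at hcon
      obtain ⟨ha, hb⟩ := hcon
      have ha' : v a = 1 := le_antisymm (hle a) ha
      have hb' : v b = 1 := le_antisymm (hle b) hb
      rw [ha', hb'] at hab
      simp at hab
  · intro hbot
    have hgm : v g < 1 := lt_of_le_of_ne (hle g) hg1
    have : g ∈ (⊥ : Ideal (Polynomial K)) := by rw [← hbot]; exact hgm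
    exact hg0 (by simpa using this)
end

section
/- If 𝔪 is a maximal ideal of a finitely generated algebra A over a complete nonarchimedean field K, then there is exactly one multiplicative seminorm on A extending the norm on K whose kernel is 𝔪. (The residue field A/𝔪 is a finite extension of K, and the norm on a complete field extends uniquely to any algebraic extension.) -/
open scoped Polynomial

section Ext
variable {K : Type*} [NormedField K] [IsUltrametricDist K]
variable {L : Type*} [Field L] [Algebra K L]

def IsMulExtNorm (K : Type*) [NormedField K] {L : Type*} [Field L] [Algebra K L]
    (w : L → ℝ) : Prop :=
  (∀ x, 0 ≤ w x) ∧ (∀ x y, w (x * y) = w x * w y) ∧ (∀ x y, w (x + y) ≤ w x + w y) ∧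
  (∀ c : K, w (algebraMap K L c) = ‖c‖) ∧ (∀ x, w x = 0 ↔ x = 0)

-- unit ball subring of K
def ubSubring (K : Type*) [NormedField K] [IsUltrametricDist K] : Subring K where
  carrier := {x : K | ‖x‖ ≤ 1}
  mul_mem' {a b} ha hb := by
    simp only [Set.mem_setOf_eq, norm_mul] at *
    exact mul_le_one₀ ha (norm_nonneg _) hb
  one_mem' := by simp
  add_mem' {a b} ha hb := (IsUltrametricDist.norm_add_le_max a b).trans (max_le ha hb)
  zero_mem' := by simp
  neg_mem' {a} ha := by simpa using ha

lemma mem_ubSubring {x : K} : x ∈ ubSubring K ↔ ‖x‖ ≤ 1 := Iff.rfl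

lemma ubSubring_isUnit_iff (a : ubSubring K) : IsUnit a ↔ ‖(a : K)‖ = 1 := by
  constructor
  · rintro ⟨u, rfl⟩
    have h1 : ((u : ubSubring K) : K) * ((u⁻¹ : (ubSubring K)ˣ) : K) = 1 := by
      norm_cast
      simp
    have := congrArg (fun z => ‖z‖) h1
    simp only [norm_mul, norm_one] at this
    have ha : ‖((u : ubSubring K) : K)‖ ≤ 1 := (u : ubSubring K).2
    have hb : ‖(((u⁻¹ : (ubSubring K)ˣ) : ubSubring K) : K)‖ ≤ 1 :=
      ((u⁻¹ : (ubSubring K)ˣ) : ubSubring K).2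
    nlinarith [norm_nonneg ((u : ubSubring K) : K)]
  · intro h
    have ha : (a : K) ≠ 0 := by intro h0; rw [h0] at h; simpa using h
    refine isUnit_iff_exists_inv.mpr ⟨⟨(a : K)⁻¹, ?_⟩, ?_⟩
    · rw [mem_ubSubring, norm_inv, h]; norm_num
    · exact Subtype.ext (mul_inv_cancel₀ ha)

instance : IsLocalRing (ubSubring K) := by
  refine IsLocalRing.of_nonunits_add ?_
  intro a b ha hb
  rw [mem_nonunits_iff, ubSubring_isUnit_iff] at *
  have ha' : ‖(a : K)‖ < 1 := lt_of_le_of_ne a.2 ha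
  have hb' : ‖(b : K)‖ < 1 := lt_of_le_of_ne b.2 hb
  have : ‖((a + b : ubSubring K) : K)‖ < 1 := by
    push_cast
    exact lt_of_le_of_lt (IsUltrametricDist.norm_add_le_max _ _) (max_lt ha' hb')
  exact ne_of_lt this


theorem exists_isMulExtNorm [FiniteDimensional K L] : ∃ w : L → ℝ, IsMulExtNorm K (L := L) w := by
  classical
  set σ := algebraMap K L with hσ
  have hσinj : Function.Injective σ := (algebraMap K L).injective
  let R₀ : LocalSubring L := LocalSubring.map σ ⟨ubSubring K⟩
  obtain ⟨B, hB⟩ := R₀.exists_le_valuationSubring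
  obtain ⟨hBle, hBloc⟩ := hB
  -- membership of scalars in B
  have Kmem : ∀ c : K, σ c ∈ B ↔ ‖c‖ ≤ 1 := by
    intro c
    constructor
    · intro hc
      by_contra hc1
      push_neg at hc1
      have hc0 : c ≠ 0 := by
        intro h0; rw [h0, norm_zero] at hc1; linarith
      have hd : ‖c⁻¹‖ ≤ 1 := by
        rw [norm_inv]
        exact inv_le_one_of_one_le₀ hc1.le
      have hmem : σ c⁻¹ ∈ R₀.toSubring := ⟨c⁻¹, hd, rfl⟩
      have hunit : IsUnit (Subring.inclusion hBle ⟨σ c⁻¹, hmem⟩) := by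
        refine isUnit_iff_exists_inv.mpr ⟨⟨σ c, hc⟩, Subtype.ext ?_⟩
        show σ c⁻¹ * σ c = 1
        rw [← map_mul, inv_mul_cancel₀ hc0, map_one]
      have := hBloc.map_nonunit _ hunit
      obtain ⟨⟨z, u, hu, rfl⟩, hz⟩ := isUnit_iff_exists_inv.mp this
      have : σ (c⁻¹ * u) = σ 1 := by
        rw [map_mul, map_one]
        exact congrArg Subtype.val hz
      have hcu : c⁻¹ * u = 1 := hσinj this
      have : u = c := by field_simp at hcu; linear_combination hcu
      rw [this] at hu
      exact absurd (mem_ubSubring.mp hu) (not_le.mpr hc1)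
    · intro hc
      exact hBle ⟨c, hc, rfl⟩
  have KmemU : ∀ c : K, c ≠ 0 → σ c ∈ B → (σ c)⁻¹ ∈ B → ‖c‖ = 1 := by
    intro c hc0 h1 h2
    have h2' : σ c⁻¹ ∈ B := by rw [map_inv₀]; exact h2
    have hle := (Kmem c).mp h1
    have hle' := (Kmem c⁻¹).mp h2'
    rw [norm_inv] at hle'
    have hpos : 0 < ‖c‖ := norm_pos_iff.mpr hc0
    have : 1 ≤ ‖c‖ := by
      rw [inv_le_one_iff₀] at hle'
      rcases hle' with h | h
      · linarith
      · exact h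
    linarith
  set v := B.valuation with hv
  have hdiv : ∀ x y : L, y ≠ 0 → (x / y ∈ B ↔ v x ≤ v y) := by
    intro x y hy
    rw [hv, ValuationSubring.valuation_le_iff]
    constructor
    · intro h
      exact ⟨⟨x / y, h⟩, by field_simp⟩
    · rintro ⟨a, ha⟩
      have : x / y = a := by
        field_simp [← ha]
        rw [← ha]; ring
      rw [this]; exact a.2
  have tors : ∀ x : L, x ≠ 0 → ∃ (k : ℕ) (a : K), 0 < k ∧ a ≠ 0 ∧
      x ^ k / σ a ∈ B ∧ σ a / x ^ k ∈ B := by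
    intro x hx
    have hint : IsIntegral K x := IsIntegral.of_finite K x
    set p := minpoly K x with hp
    have hpm : p.Monic := minpoly.monic hint
    have hc0 : p.coeff 0 ≠ 0 := minpoly.coeff_zero_ne_zero hint hx
    have haev : (Polynomial.aeval x) p = 0 := minpoly.aeval K x
    set t : ℕ → L := fun i => σ (p.coeff i) * x ^ i with ht
    have hsum : ∑ i ∈ p.support, t i = 0 := by
      rw [← haev, Polynomial.aeval_def, Polynomial.eval₂_eq_sum, Polynomial.sum_def]
    have htne : ∀ i ∈ p.support, t i ≠ 0 := by
      intro i hi
      refine mul_ne_zero (fun h => Polynomial.mem_support_iff.mp hi ?_) (pow_ne_zero _ hx)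
      exact hσinj (by rw [h, map_zero])
    have hsupn : p.support.Nonempty := ⟨0, Polynomial.mem_support_iff.mpr hc0⟩
    obtain ⟨j, hj, hjmax⟩ := p.support.exists_max_image (fun i => v (t i)) hsupn
    have hex : ∃ i ∈ p.support, i ≠ j ∧ v (t i) = v (t j) := by
      by_contra hcon
      push_neg at hcon
      have hlt : ∀ i ∈ p.support.erase j, v (t i) < v (t j) := by
        intro i hi
        obtain ⟨hne, hmem⟩ := Finset.mem_erase.mp hi
        exact lt_of_le_of_ne (hjmax i hmem) (hcon i hmem hne)
      have hvj : v (t j) ≠ 0 := by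
        rw [Valuation.ne_zero_iff]
        exact htne j hj
      have hsum' : ∑ i ∈ p.support.erase j, t i = - t j := by
        have h1 := Finset.sum_erase_add p.support t hj
        rw [hsum] at h1
        linear_combination h1
      have hlt2 := Valuation.map_sum_lt v hvj hlt
      rw [hsum', Valuation.map_neg] at hlt2
      exact lt_irrefl _ hlt2
    obtain ⟨i, hi, hij, hveq⟩ := hex
    have key : ∀ i j : ℕ, i ∈ p.support → j ∈ p.support → i < j → v (t i) = v (t j) →
        ∃ (k : ℕ) (a : K), 0 < k ∧ a ≠ 0 ∧ x ^ k / σ a ∈ B ∧ σ a / x ^ k ∈ B := by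
      intro i j hi hj hij hveq
      have hci : p.coeff i ≠ 0 := Polynomial.mem_support_iff.mp hi
      have hcj : p.coeff j ≠ 0 := Polynomial.mem_support_iff.mp hj
      have hti := htne i hi
      have htj := htne j hj
      have heq : x ^ (j - i) / σ (p.coeff i / p.coeff j) = t j / t i := by
        rw [map_div₀, pow_sub₀ x hx hij.le, ht]
        have h1 : σ (p.coeff i) ≠ 0 := fun h => hci (hσinj (by rw [h, map_zero]))
        have h2 : σ (p.coeff j) ≠ 0 := fun h => hcj (hσinj (by rw [h, map_zero]))
        have h3 : x ^ i ≠ 0 := pow_ne_zero _ hx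
        field_simp
      have heq' : σ (p.coeff i / p.coeff j) / x ^ (j - i) = t i / t j := by
        rw [← inv_div (t j) (t i), ← heq, inv_div]
      refine ⟨j - i, p.coeff i / p.coeff j, Nat.sub_pos_of_lt hij,
        div_ne_zero hci hcj, ?_, ?_⟩
      · rw [heq, hdiv _ _ hti]
        exact hveq.ge
      · rw [heq', hdiv _ _ htj]
        exact hveq.le
    rcases lt_or_gt_of_ne hij with h | h
    · exact key i j hi hj h hveq
    · exact key j i hj hi h hveq.symm
  choose kk aa hk ha hmem1 hmem2 using tors
  let w : L → ℝ := fun x => if h : x = 0 then 0 else ‖aa x h‖ ^ ((kk x h : ℝ)⁻¹)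
  have hσne : ∀ c : K, c ≠ 0 → σ c ≠ 0 := fun c hc h => hc (hσinj (by rw [h, map_zero]))
  -- valuation equality for valid pairs
  have hvval : ∀ (x : L) (hx : x ≠ 0) (k : ℕ) (a : K), 0 < k → a ≠ 0 →
      x ^ k / σ a ∈ B → σ a / x ^ k ∈ B → v (x ^ k) = v (σ a) := by
    intro x hx k a hk0 ha0 hm1 hm2
    have hxk : x ^ k ≠ 0 := pow_ne_zero _ hx
    apply le_antisymm
    · rw [← hdiv _ _ (hσne a ha0)]; exact hm1
    · rw [← hdiv _ _ hxk]; exact hm2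
  -- the master value lemma
  have wval : ∀ (x : L) (hx : x ≠ 0) (k : ℕ) (a : K), 0 < k → a ≠ 0 →
      x ^ k / σ a ∈ B → σ a / x ^ k ∈ B → w x = ‖a‖ ^ ((k : ℝ)⁻¹) := by
    intro x hx k a hk0 ha0 hm1 hm2
    have hk' := hk x hx
    have ha' := ha x hx
    have hva : v (x ^ kk x hx) = v (σ (aa x hx)) :=
      hvval x hx _ _ hk' ha' (hmem1 x hx) (hmem2 x hx)
    have hvb : v (x ^ k) = v (σ a) := hvval x hx k a hk0 ha0 hm1 hm2
    have hkey : v (σ (aa x hx ^ k)) = v (σ (a ^ kk x hx)) := by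
      rw [map_pow, map_pow, map_pow, map_pow, ← hva, ← hvb, ← map_pow, ← map_pow,
        ← pow_mul, ← pow_mul, Nat.mul_comm]
    have hne1 : aa x hx ^ k ≠ 0 := pow_ne_zero _ ha'
    have hne2 : a ^ kk x hx ≠ 0 := pow_ne_zero _ ha0
    have hdivmem : σ (aa x hx ^ k / a ^ kk x hx) ∈ B := by
      rw [map_div₀, hdiv _ _ (hσne _ hne2)]
      exact hkey.le
    have hdivmem' : (σ (aa x hx ^ k / a ^ kk x hx))⁻¹ ∈ B := by
      rw [map_div₀, inv_div, hdiv _ _ (hσne _ hne1)]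
      exact hkey.ge
    have hnorm1 : ‖aa x hx ^ k / a ^ kk x hx‖ = 1 :=
      KmemU _ (div_ne_zero hne1 hne2) hdivmem hdivmem'
    rw [norm_div, norm_pow, norm_pow, div_eq_one_iff_eq (pow_ne_zero _ (norm_ne_zero_iff.mpr ha0))] at hnorm1
    have hw : w x = ‖aa x hx‖ ^ ((kk x hx : ℝ)⁻¹) := dif_neg hx
    rw [hw]
    have e1 : ‖aa x hx‖ ^ ((kk x hx : ℝ)⁻¹) =
        (‖aa x hx‖ ^ (k : ℕ)) ^ (((k : ℝ) * (kk x hx : ℝ))⁻¹) := by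
      rw [← Real.rpow_natCast ‖aa x hx‖ k, ← Real.rpow_mul (norm_nonneg _)]
      congr 1
      rw [mul_inv]
      rw [← mul_assoc, mul_inv_cancel₀ (by exact_mod_cast hk0.ne')]
      ring
    have e2 : ‖a‖ ^ ((k : ℝ)⁻¹) =
        (‖a‖ ^ (kk x hx : ℕ)) ^ (((k : ℝ) * (kk x hx : ℝ))⁻¹) := by
      rw [← Real.rpow_natCast ‖a‖ (kk x hx), ← Real.rpow_mul (norm_nonneg _)]
      congr 1
      rw [mul_inv]
      rw [mul_comm ((k:ℝ))⁻¹, ← mul_assoc, mul_inv_cancel₀ (by exact_mod_cast (hk x hx).ne')]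
      ring
    rw [e1, e2, hnorm1]
  have w0 : w 0 = 0 := dif_pos rfl
  have wpos : ∀ x : L, x ≠ 0 → 0 < w x := by
    intro x hx
    have hw : w x = ‖aa x hx‖ ^ ((kk x hx : ℝ)⁻¹) := dif_neg hx
    rw [hw]
    exact Real.rpow_pos_of_pos (norm_pos_iff.mpr (ha x hx)) _
  have wnonneg : ∀ x : L, 0 ≤ w x := by
    intro x
    by_cases hx : x = 0
    · rw [hx, w0]
    · exact (wpos x hx).le
  have wext : ∀ c : K, w (σ c) = ‖c‖ := by
    intro c
    by_cases hc : c = 0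
    · rw [hc, map_zero, w0, norm_zero]
    · have h1 : σ c ^ 1 / σ c ∈ B := by
        rw [pow_one, div_self (hσne c hc)]
        exact B.one_mem
      have h2 : σ c / σ c ^ 1 ∈ B := by
        rw [pow_one, div_self (hσne c hc)]
        exact B.one_mem
      rw [wval (σ c) (hσne c hc) 1 c one_pos hc h1 h2]
      norm_num
  have wmul : ∀ x y : L, w (x * y) = w x * w y := by
    intro x y
    by_cases hx : x = 0
    · rw [hx, zero_mul, w0, zero_mul]
    by_cases hy : y = 0
    · rw [hy, mul_zero, w0, mul_zero]
    have hxy : x * y ≠ 0 := mul_ne_zero hx hy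
    set k1 := kk x hx; set a1 := aa x hx
    set k2 := kk y hy; set a2 := aa y hy
    have hk1 := hk x hx; have hk2 := hk y hy
    have ha1 := ha x hx; have ha2 := ha y hy
    have e : (x * y) ^ (k1 * k2) / σ (a1 ^ k2 * a2 ^ k1) =
        (x ^ k1 / σ a1) ^ k2 * ((y ^ k2 / σ a2) ^ k1) := by
      rw [map_mul, map_pow, map_pow]
      have h1 : σ a1 ≠ 0 := hσne _ ha1
      have h2 : σ a2 ≠ 0 := hσne _ ha2
      rw [div_pow, div_pow, ← pow_mul, ← pow_mul, mul_pow, mul_comm k2 k1]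
      exact mul_div_mul_comm _ _ _ _
    have e' : σ (a1 ^ k2 * a2 ^ k1) / (x * y) ^ (k1 * k2) =
        (σ a1 / x ^ k1) ^ k2 * ((σ a2 / y ^ k2) ^ k1) := by
      rw [map_mul, map_pow, map_pow]
      have h1 : x ^ k1 ≠ 0 := pow_ne_zero _ hx
      have h2 : y ^ k2 ≠ 0 := pow_ne_zero _ hy
      rw [div_pow, div_pow, ← pow_mul, ← pow_mul, mul_pow, mul_comm k2 k1]
      exact mul_div_mul_comm _ _ _ _
      try ring
      try exact Or.inl trivial
    have hm1 : (x * y) ^ (k1 * k2) / σ (a1 ^ k2 * a2 ^ k1) ∈ B := by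
      rw [e]
      exact B.mul_mem _ _ (pow_mem (hmem1 x hx) k2) (pow_mem (hmem1 y hy) k1)
    have hm2 : σ (a1 ^ k2 * a2 ^ k1) / (x * y) ^ (k1 * k2) ∈ B := by
      rw [e']
      exact B.mul_mem _ _ (pow_mem (hmem2 x hx) k2) (pow_mem (hmem2 y hy) k1)
    rw [wval (x * y) hxy (k1 * k2) (a1 ^ k2 * a2 ^ k1) (Nat.mul_pos hk1 hk2)
      (mul_ne_zero (pow_ne_zero _ ha1) (pow_ne_zero _ ha2)) hm1 hm2]
    have hwx : w x = ‖a1‖ ^ ((k1 : ℝ)⁻¹) := dif_neg hx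
    have hwy : w y = ‖a2‖ ^ ((k2 : ℝ)⁻¹) := dif_neg hy
    rw [hwx, hwy, norm_mul, norm_pow, norm_pow,
      Real.mul_rpow (by positivity) (by positivity),
      ← Real.rpow_natCast ‖a1‖ k2, ← Real.rpow_natCast ‖a2‖ k1,
      ← Real.rpow_mul (norm_nonneg _), ← Real.rpow_mul (norm_nonneg _)]
    congr 2
    · push_cast
      rw [mul_inv]
      field_simp
      try ring
      rw [mul_inv_cancel₀ (by exact_mod_cast hk2.ne'), one_mul]
    · push_cast
      rw [mul_inv]
      field_simp
      try ring
      rw [mul_inv_cancel₀ (by exact_mod_cast hk1.ne'), one_mul]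
  have wmono : ∀ x y : L, x ≠ 0 → y ≠ 0 → v x ≤ v y → w x ≤ w y := by
    intro x y hx hy hvxy
    set k1 := kk x hx; set a1 := aa x hx
    set k2 := kk y hy; set a2 := aa y hy
    have hk1 := hk x hx; have hk2 := hk y hy
    have ha1 := ha x hx; have ha2 := ha y hy
    have hva : v (x ^ k1) = v (σ a1) := hvval x hx _ _ hk1 ha1 (hmem1 x hx) (hmem2 x hx)
    have hvb : v (y ^ k2) = v (σ a2) := hvval y hy _ _ hk2 ha2 (hmem1 y hy) (hmem2 y hy)
    have hkey : v (σ (a1 ^ k2)) ≤ v (σ (a2 ^ k1)) := by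
      have e1 : v (σ (a1 ^ k2)) = v x ^ (k1 * k2) := by
        rw [map_pow, map_pow, ← hva, map_pow, ← pow_mul]
      have e2 : v (σ (a2 ^ k1)) = v y ^ (k1 * k2) := by
        rw [map_pow, map_pow, ← hvb, map_pow, ← pow_mul, Nat.mul_comm]
      rw [e1, e2]
      exact pow_le_pow_left' hvxy _
    have hmem : σ (a1 ^ k2 / a2 ^ k1) ∈ B := by
      rw [map_div₀, hdiv _ _ (hσne _ (pow_ne_zero _ ha2))]
      exact hkey
    have hnle : ‖a1‖ ^ (k2 : ℕ) ≤ ‖a2‖ ^ (k1 : ℕ) := by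
      have := (Kmem _).mp hmem
      rw [norm_div, norm_pow, norm_pow, div_le_one (pow_pos (norm_pos_iff.mpr ha2) _)] at this
      exact this
    have hwx : w x = ‖a1‖ ^ ((k1 : ℝ)⁻¹) := dif_neg hx
    have hwy : w y = ‖a2‖ ^ ((k2 : ℝ)⁻¹) := dif_neg hy
    rw [hwx, hwy]
    have e1 : ‖a1‖ ^ ((k1 : ℝ)⁻¹) = (‖a1‖ ^ (k2 : ℕ)) ^ (((k1 : ℝ) * (k2 : ℝ))⁻¹) := by
      rw [← Real.rpow_natCast ‖a1‖ k2, ← Real.rpow_mul (norm_nonneg _)]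
      congr 1
      rw [mul_inv]
      field_simp
      rw [mul_comm, ← div_div, div_self (by exact_mod_cast hk2.ne')]
    have e2 : ‖a2‖ ^ ((k2 : ℝ)⁻¹) = (‖a2‖ ^ (k1 : ℕ)) ^ (((k1 : ℝ) * (k2 : ℝ))⁻¹) := by
      rw [← Real.rpow_natCast ‖a2‖ k1, ← Real.rpow_mul (norm_nonneg _)]
      congr 1
      rw [mul_inv]
      field_simp
      try ring
      rw [mul_assoc, mul_inv_cancel₀ (by exact_mod_cast hk1.ne'), mul_one]
    rw [e1, e2]
    apply Real.rpow_le_rpow (by positivity) hnle (by positivity)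
  have wmax : ∀ x y : L, w (x + y) ≤ max (w x) (w y) := by
    intro x y
    by_cases hx : x = 0
    · rw [hx, zero_add]; exact le_max_right _ _
    by_cases hy : y = 0
    · rw [hy, add_zero]; exact le_max_left _ _
    by_cases hxy : x + y = 0
    · rw [hxy, w0]
      exact le_max_of_le_left (wnonneg x)
    rcases B.mem_or_inv_mem (x / y) with h | h
    · have hvxy : v x ≤ v y := (hdiv x y hy).mp h
      have hvsum : v (x + y) ≤ v y := by
        refine le_trans (v.map_add x y) ?_
        exact max_le hvxy le_rfl
      exact le_max_of_le_right (wmono _ _ hxy hy hvsum)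
    · rw [inv_div] at h
      have hvxy : v y ≤ v x := (hdiv y x hx).mp h
      have hvsum : v (x + y) ≤ v x := by
        refine le_trans (v.map_add x y) ?_
        exact max_le le_rfl hvxy
      exact le_max_of_le_left (wmono _ _ hxy hx hvsum)
  refine ⟨w, wnonneg, wmul, ?_, wext, ?_⟩
  · intro x y
    refine le_trans (wmax x y) ?_
    exact max_le (le_add_of_nonneg_right (wnonneg y)) (le_add_of_nonneg_left (wnonneg x))
  · intro x
    constructor
    · intro h
      by_contra hx
      exact (wpos x hx).ne' h
    · intro h
      rw [h, w0]

end Ext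

section Uniq
variable {K : Type*} [NormedField K] {L : Type*} [Field L] [Algebra K L]

theorem IsMulExtNorm.zero_eq {w : L → ℝ} (h : IsMulExtNorm K (L := L) w) : w 0 = 0 :=
  (h.2.2.2.2 0).mpr rfl

theorem IsMulExtNorm.one_eq {w : L → ℝ} (h : IsMulExtNorm K (L := L) w) : w 1 = 1 := by
  have := h.2.2.2.1 1
  simpa using this

theorem IsMulExtNorm.neg_eq {w : L → ℝ} (h : IsMulExtNorm K (L := L) w) (x : L) :
    w (-x) = w x := by
  have hm1 : w (-1) * w (-1) = 1 := by
    rw [← h.2.1]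
    norm_num
    exact h.one_eq
  have hnn := h.1 (-1 : L)
  have hone : w (-1 : L) = 1 := by
    rcases mul_self_eq_one_iff.mp hm1 with h' | h'
    · exact h'
    · nlinarith
  calc w (-x) = w (-1 * x) := by norm_num
  _ = w (-1) * w x := h.2.1 _ _
  _ = w x := by rw [hone, one_mul]

theorem IsMulExtNorm.pow_eq {w : L → ℝ} (h : IsMulExtNorm K (L := L) w) (x : L) (n : ℕ) :
    w (x ^ n) = w x ^ n := by
  induction n with
  | zero => simpa using h.one_eq
  | succ n ih => rw [pow_succ, pow_succ, h.2.1, ih]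

theorem IsMulExtNorm.isPowMul {w : L → ℝ} (h : IsMulExtNorm K (L := L) w) : IsPowMul w :=
  fun x n _ => h.pow_eq x n

def IsMulExtNorm.ringSeminorm {w : L → ℝ} (h : IsMulExtNorm K (L := L) w) : RingSeminorm L where
  toFun := w
  map_zero' := h.zero_eq
  add_le' := h.2.2.1
  neg' := h.neg_eq
  mul_le' := fun x y => (h.2.1 x y).le

theorem IsMulExtNorm.sum_le {w : L → ℝ} (h : IsMulExtNorm K (L := L) w)
    (s : Finset ℕ) (f : ℕ → L) : w (∑ i ∈ s, f i) ≤ ∑ i ∈ s, w (f i) := by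
  classical
  induction s using Finset.induction_on with
  | empty => simp [h.zero_eq]
  | insert _ _ hx ih =>
    rw [Finset.sum_insert hx, Finset.sum_insert hx]
    exact le_trans (h.2.2.1 _ _) (by linarith)

theorem IsMulExtNorm.eq_one_of_trivial [FiniteDimensional K L]
    (htriv : ∀ c : K, c ≠ 0 → ‖c‖ = 1)
    {w : L → ℝ} (h : IsMulExtNorm K (L := L) w) {x : L} (hx : x ≠ 0) : w x = 1 := by
  set n := Module.finrank K L with hn
  have hn1 : 1 ≤ n := Module.finrank_pos
  have hb : ∀ y : L, y ≠ 0 → w y ≤ (n : ℝ) := by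
    intro y hy
    have hint : IsIntegral K y := IsIntegral.of_finite K y
    set p := minpoly K y with hp
    set e := p.natDegree with he
    have hpm : p.Monic := minpoly.monic hint
    have he1 : 1 ≤ e := minpoly.natDegree_pos hint
    have hen : e ≤ n := minpoly.natDegree_le y
    have hsum : y ^ e = - ∑ i ∈ Finset.range e, algebraMap K L (p.coeff i) * y ^ i := by
      have haev := minpoly.aeval K y
      rw [Polynomial.aeval_eq_sum_range, Finset.sum_range_succ] at haev
      have hlead : p.coeff e = 1 := hpm.coeff_natDegree
      rw [← hp, ← he, hlead, one_smul] at haev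
      have := eq_neg_of_add_eq_zero_right haev
      rw [this]
      congr 1
      apply Finset.sum_congr rfl
      intro i _
      rw [Algebra.smul_def]
    set M := max 1 (w y) with hM
    have hM1 : 1 ≤ M := le_max_left _ _
    have hwyM : w y ≤ M := le_max_right _ _
    have hterm : ∀ i ∈ Finset.range e, w (algebraMap K L (p.coeff i) * y ^ i) ≤
        M ^ (e - 1) := by
      intro i hi
      have hi' := Finset.mem_range.mp hi
      rw [h.2.1, h.pow_eq, h.2.2.2.1]
      have hc : ‖p.coeff i‖ ≤ 1 := by
        by_cases hci : p.coeff i = 0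
        · rw [hci, norm_zero]; norm_num
        · rw [htriv _ hci]
      have hyi : w y ^ i ≤ M ^ (e - 1) := by
        calc w y ^ i ≤ M ^ i := pow_le_pow_left₀ (h.1 y) hwyM i
        _ ≤ M ^ (e - 1) := pow_le_pow_right₀ hM1 (by omega)
      calc ‖p.coeff i‖ * w y ^ i ≤ 1 * M ^ (e - 1) := by
            apply mul_le_mul hc hyi (pow_nonneg (h.1 y) i) (by norm_num)
      _ = M ^ (e - 1) := one_mul _
    have hbound : w y ^ e ≤ (e : ℝ) * M ^ (e - 1) := by
      calc w y ^ e = w (y ^ e) := (h.pow_eq y e).symm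
      _ = w (∑ i ∈ Finset.range e, algebraMap K L (p.coeff i) * y ^ i) := by
            rw [hsum, h.neg_eq]
      _ ≤ ∑ i ∈ Finset.range e, w (algebraMap K L (p.coeff i) * y ^ i) := h.sum_le _ _
      _ ≤ ∑ _i ∈ Finset.range e, M ^ (e - 1) := Finset.sum_le_sum hterm
      _ = (e : ℝ) * M ^ (e - 1) := by rw [Finset.sum_const, Finset.card_range, nsmul_eq_mul]
    by_cases hwy : w y ≤ 1
    · calc w y ≤ 1 := hwy
      _ ≤ (n : ℝ) := by exact_mod_cast hn1
    · push_neg at hwy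
      have hMy : M = w y := max_eq_right hwy.le
      rw [hMy] at hbound
      have hee : w y ^ e = w y ^ (e - 1) * w y := by
        rw [← pow_succ]
        congr 1
        omega
      rw [hee] at hbound
      have hpos : 0 < w y ^ (e - 1) := pow_pos (by linarith) _
      have : w y ≤ (e : ℝ) := by
        rw [mul_comm (e : ℝ) _] at hbound
        exact le_of_mul_le_mul_left (by linarith [mul_comm (w y ^ (e-1)) (w y)]) hpos
      calc w y ≤ (e : ℝ) := this
      _ ≤ (n : ℝ) := by exact_mod_cast hen
  have hle1 : ∀ y : L, y ≠ 0 → w y ≤ 1 := by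
    intro y hy
    by_contra hwy
    push_neg at hwy
    obtain ⟨k, hk⟩ := pow_unbounded_of_one_lt (n : ℝ) hwy
    have : w (y ^ k) ≤ (n : ℝ) := hb _ (pow_ne_zero _ hy)
    rw [h.pow_eq] at this
    linarith
  have h1 := hle1 x hx
  have h2 := hle1 x⁻¹ (inv_ne_zero hx)
  have hprod : w x * w x⁻¹ = 1 := by
    rw [← h.2.1, mul_inv_cancel₀ hx, h.one_eq]
  nlinarith [h.1 x, h.1 x⁻¹]

end Uniq

section Syn

variable {K : Type*} [NormedField K] {L : Type*} [Field L] [Algebra K L]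

def MulExtAux (K : Type*) [NormedField K] (L : Type*) [Field L] [Algebra K L]
    (_W : {w : L → ℝ // IsMulExtNorm K (L := L) w}) : Type _ := L

variable (W : {w : L → ℝ // IsMulExtNorm K (L := L) w})

instance : Field (MulExtAux K L W) := ‹Field L›
instance : Algebra K (MulExtAux K L W) := ‹Algebra K L›

noncomputable instance : NormedField (MulExtAux K L W) :=
  letI n : AddGroupNorm (MulExtAux K L W) :=
  { toFun := W.1
    map_zero' := W.2.zero_eq
    add_le' := W.2.2.2.1
    neg' := W.2.neg_eq
    eq_zero_of_map_eq_zero' := fun x hx => (W.2.2.2.2.2 x).mp hx }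
  { n.toNormedAddCommGroup, (inferInstance : Field (MulExtAux K L W)) with
    norm_mul := W.2.2.1 }

instance : NormedSpace K (MulExtAux K L W) where
  norm_smul_le c x := le_of_eq (by
    show W.1 (c • (x : L)) = ‖c‖ * W.1 x
    rw [Algebra.smul_def]; refine (W.2.2.1 (algebraMap K L c) (x : L)).trans ?_
    exact congrArg (fun t => t * W.1 x) (W.2.2.2.2.1 c))

instance [FiniteDimensional K L] : FiniteDimensional K (MulExtAux K L W) :=
  ‹FiniteDimensional K L›

end Syn

theorem isMulExtNorm_unique {K : Type*} [NormedField K] {L : Type*} [Field L] [Algebra K L]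
    [CompleteSpace K] [FiniteDimensional K L]
    (w₁ w₂ : L → ℝ) (h₁ : IsMulExtNorm K (L := L) w₁) (h₂ : IsMulExtNorm K (L := L) w₂) :
    w₁ = w₂ := by
  by_cases htriv : ∀ c : K, c ≠ 0 → ‖c‖ = 1
  · funext x
    by_cases hx : x = 0
    · rw [hx, h₁.zero_eq, h₂.zero_eq]
    · rw [h₁.eq_one_of_trivial htriv hx, h₂.eq_one_of_trivial htriv hx]
  · push_neg at htriv
    obtain ⟨c, hc0, hc1⟩ := htriv
    have hnt : ∃ c : K, 1 < ‖c‖ := by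
      rcases lt_or_gt_of_ne hc1 with hlt | hgt
      · refine ⟨c⁻¹, ?_⟩
        rw [norm_inv]
        have hpos : 0 < ‖c‖ := norm_pos_iff.mpr hc0
        exact (one_lt_inv₀ hpos).mpr hlt
      · exact ⟨c, hgt⟩
    letI : NontriviallyNormedField K := { ‹NormedField K› with non_trivial := hnt }
    have key : ∀ (Wa Wb : {w : L → ℝ // IsMulExtNorm K (L := L) w}),
        ∃ C : ℝ, 0 < C ∧ ∀ x : L, Wb.1 x ≤ C * Wa.1 x := by
      intro Wa Wb
      let f : MulExtAux K L Wa →ₗ[K] MulExtAux K L Wb :=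
        { toFun := fun x => x, map_add' := fun _ _ => rfl, map_smul' := fun _ _ => rfl }
      have hcont : Continuous f := f.continuous_of_finiteDimensional
      obtain ⟨C, hC, hCb⟩ := SemilinearMapClass.bound_of_continuous f hcont
      exact ⟨C, hC, fun x => hCb x⟩
    obtain ⟨C₁, hC₁, hb₁⟩ := key ⟨w₁, h₁⟩ ⟨w₂, h₂⟩
    obtain ⟨C₂, hC₂, hb₂⟩ := key ⟨w₂, h₂⟩ ⟨w₁, h₁⟩
    have heq := eq_seminorms (f := h₁.ringSeminorm) (g := h₂.ringSeminorm)
      h₁.isPowMul h₂.isPowMul ⟨C₂, hC₂, hb₂⟩ ⟨C₁, hC₁, hb₁⟩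
    funext x
    exact congrFun (congrArg (fun (s : RingSeminorm L) => (s : L → ℝ)) heq) x

theorem stmt18 {K A : Type*} [NormedField K] [CompleteSpace K] [IsUltrametricDist K]
    [CommRing A] [Algebra K A] (hFT : Algebra.FiniteType K A)
    (m : Ideal A) (hm : m.IsMaximal) :
    ∃! v : A → ℝ,
      (∀ f : A, 0 ≤ v f) ∧
      (∀ f g : A, v (f * g) = v f * v g) ∧
      (∀ f g : A, v (f + g) ≤ v f + v g) ∧
      (∀ c : K, v (algebraMap K A c) = ‖c‖) ∧
      (∀ f : A, v f = 0 ↔ f ∈ m) := by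
  classical
  haveI := hm
  letI : Field (A ⧸ m) := Ideal.Quotient.field m
  haveI : Algebra.FiniteType K (A ⧸ m) :=
    have := hFT; Algebra.FiniteType.of_surjective (Ideal.Quotient.mkₐ K m)
      (Ideal.Quotient.mkₐ_surjective K m)
  haveI : Module.Finite K (A ⧸ m) := finite_of_finite_type_of_isJacobsonRing K (A ⧸ m)
  haveI : FiniteDimensional K (A ⧸ m) := ‹Module.Finite K (A ⧸ m)›
  obtain ⟨w, hw⟩ := exists_isMulExtNorm (K := K) (L := A ⧸ m)
  set π : A →+* (A ⧸ m) := Ideal.Quotient.mk m with hπ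
  have hπalg : ∀ c : K, π (algebraMap K A c) = algebraMap K (A ⧸ m) c := fun c => rfl
  refine ⟨fun f => w (π f), ⟨fun f => hw.1 _, ?_, ?_, ?_, ?_⟩, ?_⟩
  · intro f g
    show w (π (f * g)) = w (π f) * w (π g)
    rw [map_mul]; exact hw.2.1 _ _
  · intro f g
    show w (π (f + g)) ≤ w (π f) + w (π g)
    rw [map_add]; exact hw.2.2.1 _ _
  · intro c
    show w (π (algebraMap K A c)) = ‖c‖
    rw [hπalg]; exact hw.2.2.2.1 c
  · intro f
    show w (π f) = 0 ↔ f ∈ m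
    rw [hw.2.2.2.2]
    exact Ideal.Quotient.eq_zero_iff_mem
  · rintro v ⟨hv1, hv2, hv3, hv4, hv5⟩
    have hker : ∀ f : A, f ∈ m → v f = 0 := fun f hf => (hv5 f).mpr hf
    have hcoset : ∀ f g : A, π f = π g → v f = v g := by
      intro f g hfg
      have hfg' : f - g ∈ m := Ideal.Quotient.eq.mp hfg
      have hgf' : g - f ∈ m := by
        have := m.neg_mem hfg'
        simpa using this
      have h1 : v f ≤ v g := by
        have h := hv3 g (f - g)
        rw [hker _ hfg', add_zero] at h
        simpa using h
      have h2 : v g ≤ v f := by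
        have h := hv3 f (g - f)
        rw [hker _ hgf', add_zero] at h
        simpa using h
      linarith
    set s : (A ⧸ m) → A := Function.surjInv Ideal.Quotient.mk_surjective with hs
    have hsec : ∀ y : A ⧸ m, π (s y) = y := fun y => Function.surjInv_eq _ y
    set w' : (A ⧸ m) → ℝ := fun y => v (s y) with hw'
    have hcomp : ∀ f : A, w' (π f) = v f := fun f => hcoset _ _ (hsec (π f))
    have hWext : IsMulExtNorm K (L := A ⧸ m) w' := by
      refine ⟨fun y => hv1 _, ?_, ?_, ?_, ?_⟩
      · intro x y
        have he : π (s (x * y)) = π (s x * s y) := by rw [map_mul, hsec, hsec, hsec]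
        show v (s (x * y)) = v (s x) * v (s y)
        rw [hcoset _ _ he, hv2]
      · intro x y
        have he : π (s (x + y)) = π (s x + s y) := by rw [map_add, hsec, hsec, hsec]
        show v (s (x + y)) ≤ v (s x) + v (s y)
        rw [hcoset _ _ he]
        exact hv3 _ _
      · intro c
        have he : π (s (algebraMap K (A ⧸ m) c)) = π (algebraMap K A c) := by
          rw [hsec, hπalg]
        show v (s (algebraMap K (A ⧸ m) c)) = ‖c‖
        rw [hcoset _ _ he, hv4]
      · intro x
        constructor
        · intro h0
          have hmem : s x ∈ m := (hv5 _).mp h0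
          have := Ideal.Quotient.eq_zero_iff_mem.mpr hmem
          rw [show Ideal.Quotient.mk m (s x) = π (s x) from rfl, hsec] at this
          exact this
        · intro h0
          rw [h0]
          show v (s 0) = 0
          exact hker _ (Ideal.Quotient.eq_zero_iff_mem.mp (hsec 0))
    have huniq := isMulExtNorm_unique w' w hWext hw
    funext f
    show v f = w (π f)
    rw [← hcomp f, huniq]
end

section
/- Let K be an ultrametric normed field and x a multiplicative seminorm on K[y] extending the norm on K such that |f|_x ≤ 1 for all f in a generating set of K[y] as a K-algebra (e.g., |y|_x ≤ 1), with the norm on K bounded by 1 on the ring of integers. Then the set U = {x ∈ (𝔸¹)^an : |y|_x ≤ 1} is a closed subset of (𝔸¹)^an, and it is compact. -/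
open Polynomial

lemma stmt19_sum_le {K : Type*} [NormedField K]
    {g : Polynomial K → NNReal}
    (hadd : ∀ f h : Polynomial K, g (f + h) ≤ g f + g h)
    (h0 : g 0 = 0) {ι : Type*} (s : Finset ι) (F : ι → Polynomial K) :
    g (∑ i ∈ s, F i) ≤ ∑ i ∈ s, g (F i) := by
  classical
  induction s using Finset.induction with
  | empty => simp [h0]
  | insert _ _ hi ih =>
    rw [Finset.sum_insert hi, Finset.sum_insert hi]
    exact (hadd _ _).trans (add_le_add_right ih _)

lemma stmt19_bound {K : Type*} [NormedField K]
    {g : Polynomial K → NNReal}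
    (hmul : ∀ f h : Polynomial K, g (f * h) = g f * g h)
    (hadd : ∀ f h : Polynomial K, g (f + h) ≤ g f + g h)
    (hC : ∀ c : K, g (Polynomial.C c) = ‖c‖₊)
    (hX : g Polynomial.X ≤ 1) (f : Polynomial K) :
    g f ≤ ∑ i ∈ f.support, ‖f.coeff i‖₊ := by
  have h0 : g 0 = 0 := by simpa using hC 0
  have hXn : ∀ n : ℕ, g (Polynomial.X ^ n) ≤ 1 := by
    intro n
    induction n with
    | zero => simp [show g 1 = 1 by simpa using hC 1]
    | succ n ih =>
      rw [pow_succ, hmul]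
      exact mul_le_one' ih hX
  calc g f = g (∑ i ∈ f.support, Polynomial.C (f.coeff i) * Polynomial.X ^ i) := by
        rw [← Polynomial.as_sum_support_C_mul_X_pow]
    _ ≤ ∑ i ∈ f.support, g (Polynomial.C (f.coeff i) * Polynomial.X ^ i) :=
        stmt19_sum_le hadd h0 _ _
    _ ≤ ∑ i ∈ f.support, ‖f.coeff i‖₊ := by
        refine Finset.sum_le_sum fun i _ => ?_
        rw [hmul, hC]
        calc ‖f.coeff i‖₊ * g (Polynomial.X ^ i) ≤ ‖f.coeff i‖₊ * 1 :=
              mul_le_mul_right (hXn i) _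
          _ = ‖f.coeff i‖₊ := mul_one _

theorem stmt19 {K : Type*} [NormedField K] [IsUltrametricDist K] :
    IsClosed {x : {x : Polynomial K → NNReal //
        (∀ f g : Polynomial K, x (f * g) = x f * x g) ∧
        (∀ f g : Polynomial K, x (f + g) ≤ x f + x g) ∧
        (∀ c : K, x (Polynomial.C c) = ‖c‖₊)} | x.1 Polynomial.X ≤ 1} ∧
    IsCompact {x : {x : Polynomial K → NNReal //
        (∀ f g : Polynomial K, x (f * g) = x f * x g) ∧
        (∀ f g : Polynomial K, x (f + g) ≤ x f + x g) ∧
        (∀ c : K, x (Polynomial.C c) = ‖c‖₊)} | x.1 Polynomial.X ≤ 1} := by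
  classical
  set P : (Polynomial K → NNReal) → Prop := fun x =>
    (∀ f g : Polynomial K, x (f * g) = x f * x g) ∧
    (∀ f g : Polynomial K, x (f + g) ≤ x f + x g) ∧
    (∀ c : K, x (Polynomial.C c) = ‖c‖₊) with hP
  have hclosed : IsClosed {x : {x : Polynomial K → NNReal // P x} |
      x.1 Polynomial.X ≤ 1} := by
    have : {x : {x : Polynomial K → NNReal // P x} | x.1 Polynomial.X ≤ 1}
        = Subtype.val ⁻¹' {g : Polynomial K → NNReal | g Polynomial.X ≤ 1} := rfl
    rw [this]
    exact (isClosed_le (continuous_apply _) continuous_const).preimage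
      continuous_subtype_val
  refine ⟨hclosed, ?_⟩
  -- ambient set in the product space
  set S : Set (Polynomial K → NNReal) :=
    {g | P g ∧ g Polynomial.X ≤ 1} with hS
  have hSclosed : IsClosed S := by
    have h1 : IsClosed {g : Polynomial K → NNReal |
        ∀ f h : Polynomial K, g (f * h) = g f * g h} := by
      simp only [Set.setOf_forall]
      refine isClosed_iInter fun f => isClosed_iInter fun h => ?_
      exact isClosed_eq (continuous_apply _)
        ((continuous_apply f).mul (continuous_apply h))
    have h2 : IsClosed {g : Polynomial K → NNReal |
        ∀ f h : Polynomial K, g (f + h) ≤ g f + g h} := by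
      simp only [Set.setOf_forall]
      refine isClosed_iInter fun f => isClosed_iInter fun h => ?_
      exact isClosed_le (continuous_apply _)
        ((continuous_apply f).add (continuous_apply h))
    have h3 : IsClosed {g : Polynomial K → NNReal |
        ∀ c : K, g (Polynomial.C c) = ‖c‖₊} := by
      simp only [Set.setOf_forall]
      refine isClosed_iInter fun c => ?_
      exact isClosed_eq (continuous_apply _) continuous_const
    have h4 : IsClosed {g : Polynomial K → NNReal | g Polynomial.X ≤ 1} :=
      isClosed_le (continuous_apply _) continuous_const
    have : S = ({g : Polynomial K → NNReal |
        ∀ f h : Polynomial K, g (f * h) = g f * g h} ∩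
        {g | ∀ f h : Polynomial K, g (f + h) ≤ g f + g h} ∩
        {g | ∀ c : K, g (Polynomial.C c) = ‖c‖₊} ∩
        {g | g Polynomial.X ≤ 1}) := by
      ext g
      simp only [hS, hP, Set.mem_setOf_eq, Set.mem_inter_iff]
      tauto
    rw [this]
    exact ((h1.inter h2).inter h3).inter h4
  have hSsub : S ⊆ Set.pi Set.univ
      (fun f : Polynomial K => Set.Icc 0 (∑ i ∈ f.support, ‖f.coeff i‖₊)) := by
    rintro g ⟨⟨hmul, hadd, hC⟩, hX⟩ f _
    exact ⟨zero_le, stmt19_bound hmul hadd hC hX f⟩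
  have hScompact : IsCompact S :=
    (isCompact_univ_pi fun f => isCompact_Icc).of_isClosed_subset hSclosed hSsub
  -- transfer to the subtype
  have hemb : Topology.IsEmbedding
      (Subtype.val : {x : Polynomial K → NNReal // P x} → Polynomial K → NNReal) :=
    Topology.IsEmbedding.subtypeVal
  rw [hemb.isCompact_iff]
  have himg : Subtype.val '' {x : {x : Polynomial K → NNReal // P x} |
      x.1 Polynomial.X ≤ 1} = S := by
    ext g
    constructor
    · rintro ⟨⟨g, hg⟩, hx, rfl⟩
      exact ⟨hg, hx⟩
    · rintro ⟨hg, hx⟩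
      exact ⟨⟨g, hg⟩, hx, rfl⟩
  rw [himg]
  exact hScompact
end
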